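/- Let J, J̃ ∈ ℂ^{k×n} with k < n both have full row rank, and let X₁, X̃₁ be orthonormal bases of the null spaces of J and J̃ respectively. If ε = ‖J - J̃‖ ≤ σ_min(J)/2, then ‖sin Θ(X₁, X̃₁)‖ ≤ 8‖J‖ε / σ_min(J)², where σ_min(J) denotes the smallest singular value of J. -/

import Mathlib

open Matrix

noncomputable def enorm {m : ℕ} (x : Fin m → ℂ) : ℝ :=
  Real.sqrt (star x ⬝ᵥ x).re

noncomputable def mnorm {m k : ℕ} (M : Matrix (Fin m) (Fin k) ℂ) : ℝ :=
  sSup {r | ∃ z : Fin k → ℂ, _root_.enorm z = 1 ∧ r = _root_.enorm (M *ᵥ z)}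

def colSpan {m k : ℕ} (U : Matrix (Fin m) (Fin k) ℂ) : Set (Fin m → ℂ) :=
  {y | ∃ z : Fin k → ℂ, y = U *ᵥ z}

noncomputable def edistS {m : ℕ} (x : Fin m → ℂ) (S : Set (Fin m → ℂ)) : ℝ :=
  sInf {r | ∃ y ∈ S, r = _root_.enorm (x - y)}

noncomputable def sinTheta {m k l : ℕ} (U : Matrix (Fin m) (Fin k) ℂ)
    (V : Matrix (Fin m) (Fin l) ℂ) : ℝ :=
  max (sSup {r | ∃ u ∈ colSpan U, _root_.enorm u = 1 ∧ r = edistS u (colSpan V)})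
      (sSup {r | ∃ v ∈ colSpan V, _root_.enorm v = 1 ∧ r = edistS v (colSpan U)})

noncomputable def sigmaMin {k m : ℕ} (J : Matrix (Fin k) (Fin m) ℂ) : ℝ :=
  sInf {r | ∃ y : Fin k → ℂ, _root_.enorm y = 1 ∧ r = _root_.enorm (Jᴴ *ᵥ y)}

lemma enorm_eq {m : ℕ} (x : Fin m → ℂ) :
    _root_.enorm x = ‖(WithLp.equiv 2 (Fin m → ℂ)).symm x‖ := by
  rw [_root_.enorm, EuclideanSpace.norm_eq]
  congr 1
  simp [dotProduct, Complex.re_sum]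
  congr 1; ext i
  rw [← Complex.normSq_eq_norm_sq]
  simp [Complex.normSq_apply, Complex.mul_re]

lemma enorm_nonneg {m : ℕ} (x : Fin m → ℂ) : 0 ≤ _root_.enorm x := by
  rw [enorm_eq]; exact norm_nonneg _

lemma cenorm_eq_zero {m : ℕ} {x : Fin m → ℂ} : _root_.enorm x = 0 ↔ x = 0 := by
  rw [enorm_eq, norm_eq_zero]
  constructor
  · intro h; have := congrArg (WithLp.equiv 2 (Fin m → ℂ)) h; simpa using this
  · intro h; subst h; rfl

lemma cenorm_zero {m : ℕ} : _root_.enorm (0 : Fin m → ℂ) = 0 := cenorm_eq_zero.2 rfl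

lemma cenorm_smul {m : ℕ} (c : ℂ) (x : Fin m → ℂ) :
    _root_.enorm (c • x) = ‖c‖ * _root_.enorm x := by
  rw [enorm_eq, enorm_eq, ← norm_smul]
  congr 1

lemma cenorm_neg {m : ℕ} (x : Fin m → ℂ) : _root_.enorm (-x) = _root_.enorm x := by
  have := cenorm_smul (-1) x
  simpa using this

lemma cenorm_add_le {m : ℕ} (x y : Fin m → ℂ) :
    _root_.enorm (x + y) ≤ _root_.enorm x + _root_.enorm y := by
  rw [enorm_eq, enorm_eq, enorm_eq]
  exact norm_add_le _ _

lemma enorm_sq {m : ℕ} (x : Fin m → ℂ) : _root_.enorm x ^ 2 = (star x ⬝ᵥ x).re := by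
  rw [enorm_eq, ← @inner_self_eq_norm_sq ℂ, EuclideanSpace.inner_eq_star_dotProduct, dotProduct_comm]; rfl

lemma re_dot_le {m : ℕ} (x y : Fin m → ℂ) :
    (star x ⬝ᵥ y).re ≤ _root_.enorm x * _root_.enorm y := by
  rw [enorm_eq, enorm_eq]
  have := re_inner_le_norm (𝕜 := ℂ) ((WithLp.equiv 2 (Fin m → ℂ)).symm x) ((WithLp.equiv 2 (Fin m → ℂ)).symm y)
  rw [EuclideanSpace.inner_eq_star_dotProduct, dotProduct_comm] at this
  exact this

lemma star_mulVec_dot {k n : ℕ} (M : Matrix (Fin k) (Fin n) ℂ) (a : Fin n → ℂ) (b : Fin k → ℂ) :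
    star (M *ᵥ a) ⬝ᵥ b = star a ⬝ᵥ (Mᴴ *ᵥ b) := by
  rw [star_mulVec, dotProduct_mulVec]

lemma opn_bound {k n : ℕ} (M : Matrix (Fin k) (Fin n) ℂ) :
    ∃ C : ℝ, ∀ x : Fin n → ℂ, _root_.enorm (M *ᵥ x) ≤ C * _root_.enorm x := by
  set L := LinearMap.toContinuousLinearMap (Matrix.toEuclideanLin M)
  refine ⟨‖L‖, fun x => ?_⟩
  have h : (WithLp.equiv 2 (Fin k → ℂ)).symm (M *ᵥ x)
      = L ((WithLp.equiv 2 (Fin n → ℂ)).symm x) := by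
    simp [L, Matrix.toEuclideanLin_apply_piLp_toLp]
  rw [enorm_eq, h, enorm_eq]
  exact L.le_opNorm _

lemma unit_exists {m : ℕ} (hm : 0 < m) : ∃ z : Fin m → ℂ, _root_.enorm z = 1 := by
  refine ⟨Pi.single ⟨0, hm⟩ 1, ?_⟩
  rw [_root_.enorm]
  have : (star (Pi.single (⟨0, hm⟩ : Fin m) (1:ℂ)) ⬝ᵥ Pi.single ⟨0, hm⟩ 1) = 1 := by
    simp [dotProduct, Pi.single_apply, apply_ite]
  rw [this]; simp

lemma mnorm_bddAbove {k n : ℕ} (M : Matrix (Fin k) (Fin n) ℂ) :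
    BddAbove {r | ∃ z : Fin n → ℂ, _root_.enorm z = 1 ∧ r = _root_.enorm (M *ᵥ z)} := by
  obtain ⟨C, hC⟩ := opn_bound M
  refine ⟨C, fun r hr => ?_⟩
  obtain ⟨z, hz, rfl⟩ := hr
  simpa [hz] using hC z

lemma le_mnorm {k n : ℕ} (M : Matrix (Fin k) (Fin n) ℂ) {z : Fin n → ℂ}
    (hz : _root_.enorm z = 1) : _root_.enorm (M *ᵥ z) ≤ mnorm M :=
  le_csSup (mnorm_bddAbove M) ⟨z, hz, rfl⟩

lemma mnorm_nonneg {k n : ℕ} (hn : 0 < n) (M : Matrix (Fin k) (Fin n) ℂ) :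
    0 ≤ mnorm M := by
  obtain ⟨z, hz⟩ := unit_exists hn
  exact le_trans (enorm_nonneg _) (le_mnorm M hz)

lemma mnorm_mulVec {k n : ℕ} (M : Matrix (Fin k) (Fin n) ℂ) (x : Fin n → ℂ) :
    _root_.enorm (M *ᵥ x) ≤ mnorm M * _root_.enorm x := by
  rcases eq_or_ne x 0 with rfl | hx
  · simp only [mulVec_zero]
    rw [cenorm_zero, cenorm_zero]; simp
  · have hc : _root_.enorm x ≠ 0 := fun h => hx (cenorm_eq_zero.1 h)
    set z : Fin n → ℂ := ((_root_.enorm x : ℂ)⁻¹) • x with hzdef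
    have hz : _root_.enorm z = 1 := by
      rw [hzdef, cenorm_smul]
      rw [norm_inv, Complex.norm_real, Real.norm_of_nonneg (enorm_nonneg x)]
      field_simp
    have h1 : M *ᵥ x = (_root_.enorm x : ℂ) • (M *ᵥ z) := by
      rw [hzdef, mulVec_smul, smul_smul]
      rw [mul_inv_cancel₀ (by exact_mod_cast hc), one_smul]
    rw [h1, cenorm_smul, Complex.norm_real, Real.norm_of_nonneg (enorm_nonneg x)]
    calc _root_.enorm x * _root_.enorm (M *ᵥ z) ≤ _root_.enorm x * mnorm M :=
          mul_le_mul_of_nonneg_left (le_mnorm M hz) (enorm_nonneg x)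
      _ = mnorm M * _root_.enorm x := mul_comm _ _

lemma mnorm_conjT_mulVec {k n : ℕ} (hn : 0 < n) (M : Matrix (Fin k) (Fin n) ℂ)
    (y : Fin k → ℂ) : _root_.enorm (Mᴴ *ᵥ y) ≤ mnorm M * _root_.enorm y := by
  set e := _root_.enorm (Mᴴ *ᵥ y) with he
  rcases eq_or_lt_of_le (enorm_nonneg (Mᴴ *ᵥ y)) with h0 | hpos
  · rw [he, ← h0]; exact mul_nonneg (mnorm_nonneg hn M) (enorm_nonneg y)
  · have hsq : e ^ 2 = (star (M *ᵥ (Mᴴ *ᵥ y)) ⬝ᵥ y).re := by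
      rw [he, enorm_sq, ← star_mulVec_dot]
    have h1 : e ^ 2 ≤ _root_.enorm (M *ᵥ (Mᴴ *ᵥ y)) * _root_.enorm y := by
      rw [hsq]; exact re_dot_le _ _
    have h2 : _root_.enorm (M *ᵥ (Mᴴ *ᵥ y)) ≤ mnorm M * e := mnorm_mulVec M _
    have h3 : e ^ 2 ≤ mnorm M * e * _root_.enorm y :=
      h1.trans (mul_le_mul_of_nonneg_right h2 (enorm_nonneg y))
    exact (mul_le_mul_iff_of_pos_right hpos).1 (by nlinarith : e * e ≤ (mnorm M * _root_.enorm y) * e)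

lemma sigma_le {k n : ℕ} (J : Matrix (Fin k) (Fin n) ℂ) {y : Fin k → ℂ}
    (hy : _root_.enorm y = 1) : sigmaMin J ≤ _root_.enorm (Jᴴ *ᵥ y) :=
  csInf_le ⟨0, fun r hr => by obtain ⟨z, _, rfl⟩ := hr; exact enorm_nonneg _⟩ ⟨y, hy, rfl⟩

lemma sigma_mulVec {k n : ℕ} (J : Matrix (Fin k) (Fin n) ℂ) (y : Fin k → ℂ)
    (hσ : 0 ≤ sigmaMin J) :
    sigmaMin J * _root_.enorm y ≤ _root_.enorm (Jᴴ *ᵥ y) := by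
  rcases eq_or_ne y 0 with rfl | hy
  · simp only [mulVec_zero]; rw [cenorm_zero, cenorm_zero]; simp
  · have hc : _root_.enorm y ≠ 0 := fun h => hy (cenorm_eq_zero.1 h)
    set z : Fin k → ℂ := ((_root_.enorm y : ℂ)⁻¹) • y with hzdef
    have hz : _root_.enorm z = 1 := by
      rw [hzdef, cenorm_smul, norm_inv, Complex.norm_real,
        Real.norm_of_nonneg (enorm_nonneg y)]
      field_simp
    have h1 : Jᴴ *ᵥ y = (_root_.enorm y : ℂ) • (Jᴴ *ᵥ z) := by
      rw [hzdef, mulVec_smul, smul_smul, mul_inv_cancel₀ (by exact_mod_cast hc), one_smul]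
    rw [h1, cenorm_smul, Complex.norm_real, Real.norm_of_nonneg (enorm_nonneg y), mul_comm]
    exact mul_le_mul_of_nonneg_left (sigma_le J hz) (enorm_nonneg y)

lemma isUnit_self_mul_conjT {k n : ℕ} (A : Matrix (Fin k) (Fin n) ℂ) (hA : A.rank = k) :
    IsUnit (A * Aᴴ) := by
  have hr : (A * Aᴴ).rank = k := by
    rw [show (A * Aᴴ).rank = A.rank from by
      open ComplexOrder in exact rank_self_mul_conjTranspose A, hA]
  rw [← Matrix.mulVec_surjective_iff_isUnit]
  have htop : LinearMap.range (A * Aᴴ).mulVecLin = ⊤ := by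
    apply Submodule.eq_top_of_finrank_eq
    rw [← Matrix.rank, hr]
    simp
  intro v
  exact LinearMap.range_eq_top.1 htop v

lemma sigma_pos {k n : ℕ} (hk : 0 < k) (A : Matrix (Fin k) (Fin n) ℂ) (hA : A.rank = k) :
    0 < sigmaMin A := by
  have hU := isUnit_self_mul_conjT A hA
  have hdet : IsUnit (A * Aᴴ).det := (Matrix.isUnit_iff_isUnit_det _).1 hU
  set B := (A * Aᴴ)⁻¹ with hB
  have hBA : B * (A * Aᴴ) = 1 := Matrix.nonsing_inv_mul _ hdet
  obtain ⟨C, hC⟩ := opn_bound (B * A)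
  have key : ∀ y : Fin k → ℂ, _root_.enorm y = 1 → 1 ≤ C * _root_.enorm (Aᴴ *ᵥ y) := by
    intro y hy
    have : (B * A) *ᵥ (Aᴴ *ᵥ y) = y := by
      rw [mulVec_mulVec, Matrix.mul_assoc, hBA, one_mulVec]
    calc (1:ℝ) = _root_.enorm y := hy.symm
      _ = _root_.enorm ((B * A) *ᵥ (Aᴴ *ᵥ y)) := by rw [this]
      _ ≤ C * _root_.enorm (Aᴴ *ᵥ y) := hC _
  obtain ⟨y₀, hy₀⟩ := unit_exists hk
  have h1 : (1:ℝ) ≤ C * _root_.enorm (Aᴴ *ᵥ y₀) := key y₀ hy₀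
  have hCpos : 0 < C := by nlinarith [enorm_nonneg (Aᴴ *ᵥ y₀)]
  have hlb : ∀ r ∈ {r | ∃ y : Fin k → ℂ, _root_.enorm y = 1 ∧ r = _root_.enorm (Aᴴ *ᵥ y)}, 1/C ≤ r := by
    rintro r ⟨y, hy, rfl⟩
    rw [div_le_iff₀ hCpos, mul_comm]
    exact key y hy
  have : 1/C ≤ sigmaMin A := le_csInf ⟨_, y₀, hy₀, rfl⟩ hlb
  exact lt_of_lt_of_le (by positivity) this

lemma dist_to_null {k n : ℕ} (A : Matrix (Fin k) (Fin n) ℂ) (hA : A.rank = k)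
    (hσ : 0 < sigmaMin A) (u : Fin n → ℂ) :
    ∃ y, A *ᵥ y = 0 ∧ _root_.enorm (u - y) ≤ _root_.enorm (A *ᵥ u) / sigmaMin A := by
  have hU := isUnit_self_mul_conjT A hA
  have hdet : IsUnit (A * Aᴴ).det := (Matrix.isUnit_iff_isUnit_det _).1 hU
  set B := (A * Aᴴ)⁻¹ with hB
  have hAB : (A * Aᴴ) * B = 1 := Matrix.mul_nonsing_inv _ hdet
  set z := A *ᵥ u with hz
  set w := B *ᵥ z with hw
  refine ⟨u - Aᴴ *ᵥ w, ?_, ?_⟩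
  · rw [mulVec_sub, mulVec_mulVec, hw, mulVec_mulVec, hAB, one_mulVec, ← hz, sub_self]
  · have husub : u - (u - Aᴴ *ᵥ w) = Aᴴ *ᵥ w := by abel
    rw [husub]
    set e := _root_.enorm (Aᴴ *ᵥ w) with he
    have hAAw : A *ᵥ (Aᴴ *ᵥ w) = z := by
      rw [mulVec_mulVec, hw, mulVec_mulVec, hAB, one_mulVec]
    have hsq : e ^ 2 = (star w ⬝ᵥ z).re := by
      rw [he, enorm_sq, star_mulVec_dot, conjTranspose_conjTranspose, hAAw]
    have h1 : e ^ 2 ≤ _root_.enorm w * _root_.enorm z := by rw [hsq]; exact re_dot_le _ _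
    have h2 : sigmaMin A * _root_.enorm w ≤ e := sigma_mulVec A w hσ.le
    rcases eq_or_lt_of_le (enorm_nonneg (Aᴴ *ᵥ w)) with h0 | hpos
    · rw [he, ← h0]; exact div_nonneg (enorm_nonneg _) hσ.le
    · have hwle : _root_.enorm w ≤ e / sigmaMin A := by
        rw [le_div_iff₀ hσ]; linarith [h2]
      have h3 : e ^ 2 ≤ (e / sigmaMin A) * _root_.enorm z :=
        h1.trans (mul_le_mul_of_nonneg_right hwle (enorm_nonneg z))
      rw [le_div_iff₀ hσ]
      have := h3
      rw [div_mul_eq_mul_div, le_div_iff₀ hσ] at this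
      nlinarith [hpos]

lemma edistS_le {m : ℕ} (x y : Fin m → ℂ) (S : Set (Fin m → ℂ)) (hy : y ∈ S) :
    edistS x S ≤ _root_.enorm (x - y) :=
  csInf_le ⟨0, fun r hr => by obtain ⟨y', _, rfl⟩ := hr; exact enorm_nonneg _⟩ ⟨y, hy, rfl⟩

lemma enorm_colSpan {m l : ℕ} (U : Matrix (Fin m) (Fin l) ℂ) (hU : Uᴴ * U = 1)
    (z : Fin l → ℂ) : _root_.enorm (U *ᵥ z) = _root_.enorm z := by
  have h : _root_.enorm (U *ᵥ z) ^ 2 = _root_.enorm z ^ 2 := by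
    rw [enorm_sq, enorm_sq, star_mulVec_dot, mulVec_mulVec, hU, one_mulVec]
  have h1 := enorm_nonneg (U *ᵥ z)
  have h2 := enorm_nonneg z
  nlinarith

theorem nullspace_perturbation {k n : ℕ} (hkn : k < n)
    (J Jt : Matrix (Fin k) (Fin n) ℂ)
    (hJ : J.rank = k) (hJt : Jt.rank = k)
    (X₁ Xt₁ : Matrix (Fin n) (Fin (n - k)) ℂ)
    (hX₁orth : X₁ᴴ * X₁ = 1) (hXt₁orth : Xt₁ᴴ * Xt₁ = 1)
    (hX₁null : colSpan X₁ = {y | J *ᵥ y = 0})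
    (hXt₁null : colSpan Xt₁ = {y | Jt *ᵥ y = 0})
    (hε : mnorm (J - Jt) ≤ sigmaMin J / 2) :
    sinTheta X₁ Xt₁ ≤ 8 * mnorm J * mnorm (J - Jt) / (sigmaMin J) ^ 2 := by
  have hnk : 0 < n - k := Nat.sub_pos_of_lt hkn
  have hn : 0 < n := lt_of_le_of_lt (Nat.zero_le k) hkn
  obtain ⟨z₀, hz₀⟩ := unit_exists hnk
  have hu₀ : _root_.enorm (X₁ *ᵥ z₀) = 1 := by rw [enorm_colSpan X₁ hX₁orth, hz₀]
  have hv₀ : _root_.enorm (Xt₁ *ᵥ z₀) = 1 := by rw [enorm_colSpan Xt₁ hXt₁orth, hz₀]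
  rw [sinTheta]
  have hS₁ne : {r | ∃ u ∈ colSpan X₁, _root_.enorm u = 1 ∧ r = edistS u (colSpan Xt₁)}.Nonempty :=
    ⟨_, X₁ *ᵥ z₀, ⟨z₀, rfl⟩, hu₀, rfl⟩
  have hS₂ne : {r | ∃ v ∈ colSpan Xt₁, _root_.enorm v = 1 ∧ r = edistS v (colSpan X₁)}.Nonempty :=
    ⟨_, Xt₁ *ᵥ z₀, ⟨z₀, rfl⟩, hv₀, rfl⟩
  rcases Nat.eq_zero_or_pos k with hk0 | hk
  · -- degenerate case k = 0
    subst hk0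
    have hallJ : ∀ y : Fin n → ℂ, J *ᵥ y = 0 := fun y => funext fun i => i.elim0
    have hallJt : ∀ y : Fin n → ℂ, Jt *ᵥ y = 0 := fun y => funext fun i => i.elim0
    have hσ0 : sigmaMin J = 0 := by
      rw [sigmaMin]
      have hemp : {r | ∃ y : Fin 0 → ℂ, _root_.enorm y = 1 ∧ r = _root_.enorm (Jᴴ *ᵥ y)} = ∅ := by
        rw [Set.eq_empty_iff_forall_notMem]
        rintro r ⟨y, hy, -⟩
        rw [Subsingleton.elim y 0, cenorm_zero] at hy
        exact one_ne_zero hy.symm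
      rw [hemp, Real.sInf_empty]
    rw [hσ0]
    have hb1 : sSup {r | ∃ u ∈ colSpan X₁, _root_.enorm u = 1 ∧ r = edistS u (colSpan Xt₁)} ≤ 0 := by
      apply csSup_le hS₁ne
      rintro r ⟨u, hu, hu1, rfl⟩
      have humem : u ∈ colSpan Xt₁ := by rw [hXt₁null]; exact hallJt u
      have h1 := edistS_le u u _ humem
      rwa [sub_self, cenorm_zero] at h1
    have hb2 : sSup {r | ∃ v ∈ colSpan Xt₁, _root_.enorm v = 1 ∧ r = edistS v (colSpan X₁)} ≤ 0 := by
      apply csSup_le hS₂ne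
      rintro r ⟨v, hv, hv1, rfl⟩
      have hvmem : v ∈ colSpan X₁ := by rw [hX₁null]; exact hallJ v
      have h1 := edistS_le v v _ hvmem
      rwa [sub_self, cenorm_zero] at h1
    have : (0:ℝ)^2 = 0 := by norm_num
    rw [this, div_zero]
    exact max_le hb1 hb2
  · set σ := sigmaMin J with hσdef
    set ε := mnorm (J - Jt) with hεdef
    have hσpos : 0 < σ := sigma_pos hk J hJ
    have hεnn : 0 ≤ ε := mnorm_nonneg hn _
    obtain ⟨y₀, hy₀⟩ := unit_exists hk
    -- Weyl-type inequality
    have hσt : σ / 2 ≤ sigmaMin Jt := by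
      refine le_csInf ⟨_root_.enorm (Jtᴴ *ᵥ y₀), ⟨y₀, hy₀, rfl⟩⟩ ?_
      rintro r ⟨y, hy, rfl⟩
      have hJy : σ ≤ _root_.enorm (Jᴴ *ᵥ y) := sigma_le J hy
      have hsplit : Jᴴ *ᵥ y = Jtᴴ *ᵥ y + (J - Jt)ᴴ *ᵥ y := by
        have habel : Jt + (J - Jt) = J := by abel
        have hJJ : Jᴴ = Jtᴴ + (J - Jt)ᴴ := by
          rw [← conjTranspose_add, habel]
        rw [hJJ, add_mulVec]
      have h2 : _root_.enorm (Jᴴ *ᵥ y) ≤ _root_.enorm (Jtᴴ *ᵥ y) + _root_.enorm ((J - Jt)ᴴ *ᵥ y) := by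
        rw [hsplit]; exact cenorm_add_le _ _
      have h3 : _root_.enorm ((J - Jt)ᴴ *ᵥ y) ≤ ε := by
        simpa [hy] using mnorm_conjT_mulVec hn (J - Jt) y
      linarith
    have hσtpos : 0 < sigmaMin Jt := lt_of_lt_of_le (half_pos hσpos) hσt
    have hb1 : sSup {r | ∃ u ∈ colSpan X₁, _root_.enorm u = 1 ∧ r = edistS u (colSpan Xt₁)}
        ≤ 2 * ε / σ := by
      apply csSup_le hS₁ne
      rintro r ⟨u, hu, hu1, rfl⟩
      rw [hX₁null] at hu
      have hJu : J *ᵥ u = 0 := hu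
      obtain ⟨y, hy0, hyd⟩ := dist_to_null Jt hJt hσtpos u
      have hymem : y ∈ colSpan Xt₁ := by rw [hXt₁null]; exact hy0
      have h1 : edistS u (colSpan Xt₁) ≤ _root_.enorm (u - y) := edistS_le u y _ hymem
      have hJtu : _root_.enorm (Jt *ᵥ u) ≤ ε := by
        have heq : (J - Jt) *ᵥ u = -(Jt *ᵥ u) := by rw [sub_mulVec, hJu, zero_sub]
        have h' := le_mnorm (J - Jt) hu1
        rwa [heq, cenorm_neg] at h'
      have h4 : _root_.enorm (Jt *ᵥ u) / sigmaMin Jt ≤ ε / (σ / 2) :=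
        div_le_div₀ hεnn hJtu (half_pos hσpos) hσt
      have h5 : ε / (σ / 2) = 2 * ε / σ := by
        field_simp
      linarith
    have hb2 : sSup {r | ∃ v ∈ colSpan Xt₁, _root_.enorm v = 1 ∧ r = edistS v (colSpan X₁)}
        ≤ 2 * ε / σ := by
      apply csSup_le hS₂ne
      rintro r ⟨v, hv, hv1, rfl⟩
      rw [hXt₁null] at hv
      have hJtv : Jt *ᵥ v = 0 := hv
      obtain ⟨y, hy0, hyd⟩ := dist_to_null J hJ hσpos v
      have hymem : y ∈ colSpan X₁ := by rw [hX₁null]; exact hy0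
      have h1 : edistS v (colSpan X₁) ≤ _root_.enorm (v - y) := edistS_le v y _ hymem
      have hJv : _root_.enorm (J *ᵥ v) ≤ ε := by
        have heq : (J - Jt) *ᵥ v = J *ᵥ v := by rw [sub_mulVec, hJtv, sub_zero]
        have h' := le_mnorm (J - Jt) hv1
        rwa [heq] at h'
      have h4 : _root_.enorm (J *ᵥ v) / σ ≤ ε / σ := (div_le_div_iff_of_pos_right hσpos).2 hJv
      have h6 : ε / σ ≤ 2 * ε / σ := (div_le_div_iff_of_pos_right hσpos).2 (by linarith)
      linarith
    have hσleM : σ ≤ mnorm J :=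
      le_trans (sigma_le J hy₀) (by simpa [hy₀] using mnorm_conjT_mulVec hn J y₀)
    have hfinal : 2 * ε / σ ≤ 8 * mnorm J * ε / σ ^ 2 := by
      rw [div_le_div_iff₀ hσpos (by positivity)]
      nlinarith [mul_nonneg hεnn hσpos.le,
        mul_le_mul_of_nonneg_left hσleM (mul_nonneg hεnn hσpos.le)]
    exact le_trans (max_le hb1 hb2) hfinal
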